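/- Suppose a sequence graph is connected (any two vertices are joined by a finite walk along edges) and every vertex is an endpoint of at least one segment edge and at least one bond edge. Then every integer flow on the graph can be written as a finite sum of alternating flows of even-length cycle traversals. -/

import Mathlib

open scoped Classical
open Finset

noncomputable section

/-- A sequence graph: finite multigraph whose edges are split into segment
edges (`seg`) and bond edges, each segment edge having two distinct endpoints. -/
structure SeqGraph (V E : Type) where
  ends : E → Sym2 V
  seg : E → Prop
  seg_not_diag : ∀ x : E, seg x → ¬ (ends x).IsDiag

namespace SeqGraph

variable {V E : Type} [Fintype V] [Fintype E]

/-- Incidence multiplicity of vertex `u` on edge `x`. -/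
def mult (G : SeqGraph V E) (u : V) (x : E) : ℤ :=
  if G.ends x = s(u, u) then 2 else if u ∈ G.ends x then 1 else 0

/-- The balance condition: at each vertex the total weight of segment-edge
incidences equals the total weight of bond-edge incidences. -/
def IsFlow (G : SeqGraph V E) (f : E → ℤ) : Prop :=
  ∀ u : V,
    (∑ x : E, if G.seg x then G.mult u x * f x else 0) =
      ∑ x : E, if G.seg x then 0 else G.mult u x * f x

/-- ℓ¹ norm of an integer weighting. -/
def l1 (f : E → ℤ) : ℤ := ∑ x : E, |f x|

/-- A (nonzero) integer flow is minimal if it admits no nontrivial ℓ¹-additive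
decomposition into nonzero integer flows. -/
def MinimalFlow (G : SeqGraph V E) (f : E → ℤ) : Prop :=
  ¬ ∃ f₁ f₂ : E → ℤ, G.IsFlow f₁ ∧ G.IsFlow f₂ ∧ f₁ ≠ 0 ∧ f₂ ≠ 0 ∧
      f = f₁ + f₂ ∧ l1 f = l1 f₁ + l1 f₂

/-- A cycle traversal of length `L ≥ 1`. -/
structure CycleTraversal (G : SeqGraph V E) where
  L : ℕ
  pos : L ≠ 0
  e : ZMod L → E
  v : ZMod L → V
  compat : ∀ i : ZMod L, G.ends (e i) = s(v (i - 1), v i)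

variable {G : SeqGraph V E}

/-- Number of indices at which the traversal uses edge `x`. -/
def CycleTraversal.threadCount (t : G.CycleTraversal) (x : E) : ℕ :=
  haveI : NeZero t.L := ⟨t.pos⟩
  (Finset.univ.filter fun i : ZMod t.L => t.e i = x).card

/-- The thread flow of a traversal. -/
def CycleTraversal.threadFlow (t : G.CycleTraversal) : E → ℤ :=
  fun x => (t.threadCount x : ℤ)

/-- A sequence traversal: even length, alternating between segment edges
(at even indices) and bond edges (at odd indices). -/
def CycleTraversal.IsSeqTraversal (t : G.CycleTraversal) : Prop :=
  Even t.L ∧ ∀ i : ZMod t.L, G.seg (t.e i) ↔ Even i.val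

/-- Alternating weighting `∑ i, (-1)^i δ_{e i}` of an (even-length) traversal. -/
def CycleTraversal.altWeight (t : G.CycleTraversal) : E → ℤ :=
  haveI : NeZero t.L := ⟨t.pos⟩
  fun x => ∑ i : ZMod t.L, if t.e i = x then (-1 : ℤ) ^ i.val else 0

/-- Conjugate weighting: keep the value on segment edges, negate on bonds. -/
def conj (G : SeqGraph V E) (g : E → ℤ) : E → ℤ :=
  fun x => if G.seg x then g x else -g x

/-- Alternating flow: the conjugate of the alternating weighting. -/
def CycleTraversal.altFlow (t : G.CycleTraversal) : E → ℤ :=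
  G.conj t.altWeight

/-- Tight: equal edges only appear at indices of equal parity. -/
def CycleTraversal.Tight (t : G.CycleTraversal) : Prop :=
  ∀ i j : ZMod t.L, t.e i = t.e j → i.val % 2 = j.val % 2

/-- Synchronized: coinciding (distinct, same end vertex) indices differ by an
odd integer. -/
def CycleTraversal.Synchronized (t : G.CycleTraversal) : Prop :=
  ∀ i j : ZMod t.L, i ≠ j → t.v i = t.v j → Odd ((i.val : ℤ) - (j.val : ℤ))

/-- Nested: no interleaved pairs of coinciding indices. -/
def CycleTraversal.Nested (t : G.CycleTraversal) : Prop :=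
  ¬ ∃ i₁ i₂ j₁ j₂ : ZMod t.L,
      i₁.val < i₂.val ∧ i₂.val < j₁.val ∧ j₁.val < j₂.val ∧
      t.v i₁ = t.v j₁ ∧ t.v i₂ = t.v j₂

/-- Connectivity: any two vertices are joined by a finite walk along edges. -/
def Connected (G : SeqGraph V E) : Prop :=
  ∀ a b : V, ∃ (n : ℕ) (p : Fin (n + 1) → V), p 0 = a ∧ p (Fin.last n) = b ∧
    ∀ i : Fin n, ∃ x : E, G.ends x = s(p i.castSucc, p i.succ)



section Aux
set_option linter.unusedSectionVars false
variable {G : SeqGraph V E}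

lemma mult_eq {u a b : V} {x : E} (h : G.ends x = s(a, b)) :
    G.mult u x = (if u = a then 1 else 0) + (if u = b then 1 else 0) := by
  unfold mult
  rw [h]
  by_cases ha : u = a <;> by_cases hb : u = b <;>
    simp [ha, hb, Sym2.eq_iff, Sym2.mem_iff] <;> aesop
lemma mult_nonneg (u : V) (x : E) : 0 ≤ G.mult u x := by
  unfold mult; split_ifs <;> norm_num
lemma mem_of_mult_ne {u : V} {x : E} (h : G.mult u x ≠ 0) : u ∈ G.ends x := by
  unfold mult at h
  split_ifs at h with h1 h2
  · rw [h1]; simp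
  · exact h2
  · simp at h
lemma neg_one_pow_congr {a b : ℕ} (h : a % 2 = b % 2) : (-1:ℤ)^a = (-1)^b := by
  conv_lhs => rw [← Nat.div_add_mod a 2]
  conv_rhs => rw [← Nat.div_add_mod b 2]
  rw [pow_add, pow_add, pow_mul, pow_mul, h]
  norm_num
lemma neg_one_pow_eq_sign {j : ℕ} {c : ℤ} (h : 0 < (-1:ℤ)^j * c) :
    (-1:ℤ)^j = Int.sign c := by
  rcases Nat.even_or_odd j with hj | hj
  · rw [hj.neg_one_pow] at h ⊢
    rw [Int.sign_eq_one_of_pos]; linarith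
  · rw [hj.neg_one_pow] at h ⊢
    rw [Int.sign_eq_neg_one_of_neg]; linarith
def walkCnt (k : ℕ) (e : ℕ → E) (x : E) : ℤ := ∑ j ∈ range k, if e j = x then 1 else 0
lemma walkCnt_nonneg (k : ℕ) (e : ℕ → E) (x : E) : 0 ≤ walkCnt k e x :=
  Finset.sum_nonneg fun j _ => by split_ifs <;> norm_num
lemma walkCnt_succ (k : ℕ) (e : ℕ → E) (x : E) :
    walkCnt (k+1) e x = walkCnt k e x + (if e k = x then 1 else 0) :=
  Finset.sum_range_succ _ _

lemma exists_ext {g : E → ℤ} (hbal : ∀ u : V, ∑ x : E, G.mult u x * g x = 0)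
    (k : ℕ) (e : ℕ → E) (v : ℕ → V)
    (hcompat : ∀ j < k, G.ends (e j) = s(v j, v (j+1)))
    (hsign : ∀ j < k, 0 < (-1:ℤ)^j * g (e j))
    (hcnt : ∀ x, walkCnt k e x ≤ |g x|)
    (hstates : v 0 = v k → k % 2 = 1) :
    ∃ x : E, 0 < (-1:ℤ)^k * g x ∧ v k ∈ G.ends x ∧ walkCnt k e x < |g x| := by
  by_contra hcon
  push_neg at hcon
  set u := v k with hu
  set t : ℤ := (-1)^k with htdef
  have ht : t = 1 ∨ t = -1 := by
    rcases Nat.even_or_odd k with h | h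
    · left; rw [htdef, h.neg_one_pow]
    · right; rw [htdef, h.neg_one_pow]
  have ht2 : t * t = 1 := by rcases ht with h | h <;> rw [h] <;> ring
  -- step (a): telescoping
  have ha : ∑ j ∈ range k, (-1:ℤ)^j * G.mult u (e j)
      = (if u = v 0 then 1 else 0) - t * (if u = v k then 1 else 0) := by
    have : ∀ j ∈ range k, (-1:ℤ)^j * G.mult u (e j) =
        (fun j => (-1:ℤ)^j * (if u = v j then 1 else 0)) j
        - (fun j => (-1:ℤ)^j * (if u = v j then 1 else 0)) (j+1) := by
      intro j hj
      rw [mult_eq (hcompat j (mem_range.mp hj))]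
      simp only [pow_succ]
      ring
    rw [Finset.sum_congr rfl this, Finset.sum_range_sub']
    simp [htdef]
  -- step (b)+(c): fiberwise
  have hb : ∑ j ∈ range k, (-1:ℤ)^j * G.mult u (e j)
      = ∑ x : E, G.mult u x * Int.sign (g x) * walkCnt k e x := by
    have hb1 : ∀ j ∈ range k, (-1:ℤ)^j * G.mult u (e j)
        = G.mult u (e j) * Int.sign (g (e j)) := by
      intro j hj
      rw [neg_one_pow_eq_sign (hsign j (mem_range.mp hj))]; ring
    rw [Finset.sum_congr rfl hb1]
    unfold walkCnt
    have : ∀ x : E, G.mult u x * Int.sign (g x) * (∑ j ∈ range k, if e j = x then (1:ℤ) else 0)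
        = ∑ j ∈ range k, (if e j = x then G.mult u x * Int.sign (g x) else 0) := by
      intro x
      rw [Finset.mul_sum]
      exact Finset.sum_congr rfl fun j _ => by split_ifs <;> ring
    rw [Finset.sum_congr rfl (fun x _ => this x), Finset.sum_comm]
    apply Finset.sum_congr rfl
    intro j _
    rw [Finset.sum_eq_single (e j)]
    · simp
    · intro b _ hbne; simp [Ne.symm hbne]
    · simp
  -- per-edge inequality
  have key : ∀ x : E, t * (G.mult u x * g x)
      ≤ t * (G.mult u x * (Int.sign (g x) * walkCnt k e x)) := by
    intro x
    by_cases hm : G.mult u x = 0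
    · rw [hm]; simp
    have claim : t * g x ≤ t * (Int.sign (g x) * walkCnt k e x) := by
      rcases lt_trichotomy (t * g x) 0 with hneg | hzero | hpos
      · -- negative case
        have hcntx := hcnt x
        rcases ht with h | h <;> rw [h] at hneg ⊢
        · have hg : g x < 0 := by linarith
          rw [Int.sign_eq_neg_one_of_neg hg]
          have : |g x| = -g x := abs_of_neg hg
          linarith
        · have hg : 0 < g x := by linarith
          rw [Int.sign_eq_one_of_pos hg]
          have : |g x| = g x := abs_of_pos hg
          linarith
      · have hgz : g x = 0 := by
          rcases ht with h | h <;> rw [h] at hzero <;> linarith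
        simp [hgz]
      · -- positive case: the used count is maximal
        have hmem : u ∈ G.ends x := mem_of_mult_ne hm
        have hle : |g x| ≤ walkCnt k e x := hcon x hpos hmem
        have heq : walkCnt k e x = |g x| := le_antisymm (hcnt x) hle
        rcases ht with h | h <;> rw [h] at hpos ⊢
        · have hg : 0 < g x := by linarith
          rw [Int.sign_eq_one_of_pos hg, heq, abs_of_pos hg]
          linarith
        · have hg : g x < 0 := by linarith
          rw [Int.sign_eq_neg_one_of_neg hg, heq, abs_of_neg hg]
          linarith
    calc t * (G.mult u x * g x) = G.mult u x * (t * g x) := by ring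
      _ ≤ G.mult u x * (t * (Int.sign (g x) * walkCnt k e x)) :=
          mul_le_mul_of_nonneg_left claim (mult_nonneg u x)
      _ = t * (G.mult u x * (Int.sign (g x) * walkCnt k e x)) := by ring
  have h0 : ∑ x : E, t * (G.mult u x * g x) = 0 := by
    rw [← Finset.mul_sum, hbal u]; ring
  have hsum : 0 ≤ t * ∑ x : E, G.mult u x * Int.sign (g x) * walkCnt k e x := by
    have h1 := Finset.sum_le_sum (fun x (_ : x ∈ univ) => key x)
    rw [h0, ← Finset.mul_sum] at h1
    calc (0:ℤ) ≤ t * ∑ x : E, G.mult u x * (Int.sign (g x) * walkCnt k e x) := h1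
      _ = t * ∑ x : E, G.mult u x * Int.sign (g x) * walkCnt k e x := by
          congr 1; exact Finset.sum_congr rfl fun x _ => by ring
  rw [← hb, ha] at hsum
  have huvk : (if u = v k then (1:ℤ) else 0) = 1 := by simp [hu]
  rw [huvk] at hsum
  by_cases h0v : u = v 0
  · have h0v1 : (if u = v 0 then (1:ℤ) else 0) = 1 := by simp [h0v]
    rw [h0v1] at hsum
    have ht1 : t = 1 := by
      rcases ht with h | h
      · exact h
      · rw [h] at hsum; norm_num at hsum
    have hkodd : k % 2 = 1 := hstates (h0v ▸ hu)
    have : Odd k := Nat.odd_iff.mpr hkodd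
    rw [this.neg_one_pow] at htdef
    rw [htdef] at ht1; norm_num at ht1
  · have h0v0 : (if u = v 0 then (1:ℤ) else 0) = 0 := by simp [h0v]
    rw [h0v0] at hsum
    have : t * (0 - t * 1) = -(t*t) := by ring
    rw [this, ht2] at hsum
    norm_num at hsum

/-- walk data: compatibility, alternation of signs matching `g`, and count bound -/
def IsWalk (G : SeqGraph V E) (g : E → ℤ) (m : ℕ) (e : ℕ → E) (v : ℕ → V) : Prop :=
  (∀ j < m, G.ends (e j) = s(v j, v (j+1))) ∧
  (∀ j < m, 0 < (-1:ℤ)^j * g (e j)) ∧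
  (∀ x, walkCnt m e x ≤ |g x|)

lemma exists_cycle {g : E → ℤ} (hbal : ∀ u : V, ∑ x : E, G.mult u x * g x = 0)
    (hg : g ≠ 0) :
    ∃ (i L : ℕ) (e : ℕ → E) (v : ℕ → V), 0 < L ∧ 2 ∣ L ∧ v (i+L) = v i ∧
      IsWalk G g (i+L) e v := by
  -- find an edge with positive weight
  have hsum2 : ∑ x : E, g x = 0 := by
    have htot : ∑ u : V, ∑ x : E, G.mult u x * g x = 0 :=
      Finset.sum_eq_zero fun u _ => hbal u
    rw [Finset.sum_comm] at htot
    have h2 : ∀ x : E, ∑ u : V, G.mult u x * g x = 2 * g x := by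
      intro x
      obtain ⟨p, hp⟩ := Quot.exists_rep (G.ends x)
      have hab : G.ends x = s(p.1, p.2) := by rw [← hp]
      rw [← Finset.sum_mul]
      congr 1
      rw [Finset.sum_congr rfl (fun u (_ : u ∈ univ) => mult_eq hab)]
      rw [Finset.sum_add_distrib]
      simp
    rw [Finset.sum_congr rfl (fun x _ => h2 x)] at htot
    rw [← Finset.mul_sum] at htot
    linarith
  have hx0 : ∃ x0 : E, 0 < g x0 := by
    by_contra hcon
    push_neg at hcon
    apply hg
    funext x
    exact Finset.sum_eq_zero_iff_of_nonpos (fun y _ => hcon y) |>.mp hsum2 x (mem_univ x)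
  obtain ⟨x0, hx0⟩ := hx0
  -- the main walk-extension induction
  have main : ∀ k : ℕ, (∃ (i L : ℕ) (e : ℕ → E) (v : ℕ → V), 0 < L ∧ 2 ∣ L ∧
      v (i+L) = v i ∧ IsWalk G g (i+L) e v) ∨
      (∃ (e : ℕ → E) (v : ℕ → V), IsWalk G g (k+1) e v ∧
        (∀ a b : ℕ, a < b → b ≤ k+1 → v a = v b → a % 2 ≠ b % 2)) := by
    intro k
    induction k with
    | zero =>
      right
      obtain ⟨p, hp⟩ := Quot.exists_rep (G.ends x0)
      have hab : G.ends x0 = s(p.1, p.2) := by rw [← hp]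
      refine ⟨fun _ => x0, fun j => if j = 0 then p.1 else p.2, ⟨?_, ?_, ?_⟩, ?_⟩
      · intro j hj
        interval_cases j
        simpa using hab
      · intro j hj
        interval_cases j
        simpa using hx0
      · intro x
        have : walkCnt 1 (fun _ => x0) x = if x0 = x then 1 else 0 := by
          simp [walkCnt]
        rw [this]
        split_ifs with h
        · rw [← h, abs_of_pos hx0]; omega
        · exact abs_nonneg _
      · intro a b hab' hb _
        omega
    | succ k ih =>
      rcases ih with hq | ⟨e, v, ⟨hc, hs, hcn⟩, hst⟩
      · left; exact hq
      set m := k + 1 with hm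
      have hstates : v 0 = v m → m % 2 = 1 := by
        intro hv
        have := hst 0 m (Nat.succ_pos k) le_rfl hv
        omega
      obtain ⟨x, hx1, hx2, hx3⟩ := exists_ext hbal m e v hc hs hcn hstates
      obtain ⟨b, hbx⟩ := Sym2.mem_iff_exists.mp hx2
      set e' : ℕ → E := Function.update e m x with he'
      set v' : ℕ → V := Function.update v (m+1) b with hv'
      have he'lt : ∀ j < m, e' j = e j := by
        intro j hj; rw [he']; exact Function.update_of_ne (by omega) _ _
      have he'm : e' m = x := Function.update_self _ _ _
      have hv'le : ∀ j ≤ m, v' j = v j := by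
        intro j hj; rw [hv']; exact Function.update_of_ne (by omega) _ _
      have hv'm : v' (m+1) = b := Function.update_self _ _ _
      have hcompat' : ∀ j < m+1, G.ends (e' j) = s(v' j, v' (j+1)) := by
        intro j hj
        rcases Nat.lt_or_ge j m with h | h
        · rw [he'lt j h, hv'le j (by omega), hv'le (j+1) (by omega)]
          exact hc j h
        · have hjm : j = m := by omega
          rw [hjm, he'm, hv'le m le_rfl, hv'm]
          exact hbx
      have hsign' : ∀ j < m+1, 0 < (-1:ℤ)^j * g (e' j) := by
        intro j hj
        rcases Nat.lt_or_ge j m with h | h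
        · rw [he'lt j h]; exact hs j h
        · have hjm : j = m := by omega
          rw [hjm, he'm]; exact hx1
      have hwc : ∀ y, walkCnt m e' y = walkCnt m e y := by
        intro y
        exact Finset.sum_congr rfl fun j hj => by
          rw [he'lt j (mem_range.mp hj)]
      have hcnt' : ∀ y, walkCnt (m+1) e' y ≤ |g y| := by
        intro y
        rw [walkCnt_succ, hwc, he'm]
        split_ifs with h
        · subst h; omega
        · have := hcn y; omega
      by_cases hrep : ∃ i, i ≤ m ∧ v' i = v' (m+1) ∧ i % 2 = (m+1) % 2
      · left
        obtain ⟨i, hi, hvi, hpar⟩ := hrep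
        refine ⟨i, m+1-i, e', v', by omega, ?_, ?_, ?_, ?_, ?_⟩
        · omega
        · rw [show i + (m+1-i) = m+1 by omega]
          exact hvi.symm
        · rw [show i + (m+1-i) = m+1 by omega]
          exact hcompat'
        · rw [show i + (m+1-i) = m+1 by omega]
          exact hsign'
        · rw [show i + (m+1-i) = m+1 by omega]
          exact hcnt'
      · right
        push_neg at hrep
        refine ⟨e', v', ⟨hcompat', hsign', hcnt'⟩, ?_⟩
        intro a b' hab' hb' hv
        rcases Nat.lt_or_ge b' (m+1) with h | h
        · rw [hv'le a (by omega), hv'le b' (by omega)] at hv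
          exact hst a b' hab' (by omega) hv
        · have hb'eq : b' = m+1 := by omega
          subst hb'eq
          intro hpar
          exact hrep a (by omega) hv hpar
  -- pigeonhole: the walk cannot be extended forever
  rcases main (2 * Fintype.card V) with hq | ⟨e, v, _, hst⟩
  · exact hq
  exfalso
  set K := 2 * Fintype.card V + 1 with hK
  have hinj : Function.Injective
      (fun j : Fin (K+1) => ((v j, ⟨j.val % 2, by omega⟩) : V × Fin 2)) := by
    intro j1 j2 hj
    simp only [Prod.mk.injEq, Fin.mk.injEq] at hj
    by_contra hne
    rcases Nat.lt_or_ge j1.val j2.val with h | h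
    · exact hst j1 j2 h (by omega) hj.1 hj.2
    · have : j2.val < j1.val := by
        rcases Nat.lt_or_ge j2.val j1.val with h' | h'
        · exact h'
        · exact absurd (Fin.ext (by omega)) hne
      exact hst j2 j1 this (by omega) hj.1.symm hj.2.symm
  have := Fintype.card_le_of_injective _ hinj
  simp at this
  omega


/-- integer count of indices of a traversal using edge `x` -/
def tcnt (t : G.CycleTraversal) (x : E) : ℤ :=
  haveI : NeZero t.L := ⟨t.pos⟩
  ∑ m : ZMod t.L, if t.e m = x then 1 else 0

lemma tcnt_nonneg (t : G.CycleTraversal) (x : E) : 0 ≤ tcnt t x := by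
  haveI : NeZero t.L := ⟨t.pos⟩
  exact Finset.sum_nonneg fun m _ => by split_ifs <;> norm_num

lemma one_le_tcnt (t : G.CycleTraversal) :
    haveI : NeZero t.L := ⟨t.pos⟩
    ∀ m0 : ZMod t.L, 1 ≤ tcnt t (t.e m0) := by
  haveI : NeZero t.L := ⟨t.pos⟩
  intro m0
  unfold tcnt
  refine le_trans ?_ (Finset.single_le_sum
    (f := fun m : ZMod t.L => if t.e m = t.e m0 then (1:ℤ) else 0)
    (fun m _ => by split_ifs <;> norm_num) (mem_univ m0))
  simp

lemma exists_traversal {g : E → ℤ} (hbal : ∀ u : V, ∑ x : E, G.mult u x * g x = 0)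
    (hg : g ≠ 0) :
    ∃ t : G.CycleTraversal, Even t.L ∧
      (haveI : NeZero t.L := ⟨t.pos⟩
       ∀ m : ZMod t.L, 0 < (-1:ℤ)^(m.val) * g (t.e m)) ∧
      (∀ x : E, tcnt t x ≤ |g x|) := by
  obtain ⟨i, L, e, v, hL, hL2, hclose, hc, hs, hcn⟩ := exists_cycle hbal hg
  haveI : NeZero L := ⟨by omega⟩
  have hL2' : 2 ≤ L := by
    rcases hL2 with ⟨c, hcc⟩; omega
  set s : ℕ := i % 2 with hsdef
  have hsL : s < L := by omega
  have hmodlt : ∀ a : ℕ, a % L < L := fun a => Nat.mod_lt _ (by omega)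
  have key1 : ∀ a : ℕ, v (i + a % L + 1) = v (i + (a+1) % L) := by
    intro a
    have hmod : (a+1) % L = (a % L + 1) % L := by
      conv_lhs => rw [Nat.add_mod, Nat.mod_eq_of_lt (show 1 < L by omega)]
    rcases Nat.lt_or_ge (a % L + 1) L with h | h
    · rw [hmod, Nat.mod_eq_of_lt h]
      exact congrArg v (by omega)
    · have h1 : a % L + 1 = L := by have := hmodlt a; omega
      have h2 : (a+1) % L = 0 := by rw [hmod, h1, Nat.mod_self]
      rw [h2]
      rw [show i + a % L + 1 = i + L by omega]
      rw [hclose]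
      exact congrArg v (by omega)
  have key2 : ∀ a b : ℕ, ((a : ZMod L) = (b : ZMod L)) → a % L = b % L := by
    intro a b h
    exact (ZMod.natCast_eq_natCast_iff a b L).mp h
  refine ⟨⟨L, by omega, fun mm => e (i + (mm.val + s) % L),
      fun mm => v (i + (mm.val + s + 1) % L), ?_⟩, ?_, ?_, ?_⟩
  · -- compat
    intro mm
    have hj : i + (mm.val + s) % L < i + L := by have := hmodlt (mm.val + s); omega
    have base := hc (i + (mm.val + s) % L) hj
    have heq : ((mm-1).val + s + 1) % L = (mm.val + s) % L := by
      apply key2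
      push_cast
      rw [ZMod.natCast_rightInverse (mm-1), ZMod.natCast_rightInverse mm]
      ring
    show G.ends (e (i + (mm.val + s) % L))
        = s(v (i + ((mm-1).val + s + 1) % L), v (i + (mm.val + s + 1) % L))
    rw [heq, ← key1 (mm.val + s)]
    exact base
  · -- even
    obtain ⟨c, hcc⟩ := hL2
    exact ⟨c, by show L = c + c; omega⟩
  · -- sign
    intro mm
    have hj : i + (mm.val + s) % L < i + L := by have := hmodlt (mm.val + s); omega
    have base := hs (i + (mm.val + s) % L) hj
    have hp : ((mm.val + s) % L) % 2 = (mm.val + s) % 2 := Nat.mod_mod_of_dvd _ hL2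
    have hpar : (i + (mm.val + s) % L) % 2 = mm.val % 2 := by omega
    rw [← neg_one_pow_congr hpar]
    exact base
  · -- counts
    intro x
    show (∑ mm : ZMod L, if e (i + (mm.val + s) % L) = x then (1:ℤ) else 0) ≤ |g x|
    have step1 : ∀ mm : ZMod L, (mm.val + s) % L = (mm + (s : ZMod L)).val := by
      intro mm
      rw [ZMod.val_add, ZMod.val_natCast, Nat.mod_eq_of_lt hsL]
    have step2 : (∑ mm : ZMod L, if e (i + (mm.val + s) % L) = x then (1:ℤ) else 0)
        = ∑ mm : ZMod L, if e (i + mm.val) = x then (1:ℤ) else 0 := by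
      apply Fintype.sum_equiv (Equiv.addRight ((s : ZMod L)))
      intro mm
      rw [step1 mm]
      rfl
    have step3 : (∑ mm : ZMod L, if e (i + mm.val) = x then (1:ℤ) else 0)
        = ∑ j ∈ range L, if e (i + j) = x then (1:ℤ) else 0 := by
      apply Finset.sum_nbij' (fun (mm : ZMod L) => mm.val) (fun (j : ℕ) => (j : ZMod L))
      · intro a _; exact mem_range.mpr a.val_lt
      · intro a _; exact mem_univ _
      · intro a _; exact ZMod.natCast_rightInverse a
      · intro a ha; exact ZMod.val_natCast_of_lt (mem_range.mp ha)
      · intro a _; rfl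
    have step4 : (∑ j ∈ range L, if e (i + j) = x then (1:ℤ) else 0)
        = ∑ j ∈ Finset.Ico i (i+L), if e j = x then (1:ℤ) else 0 := by
      rw [Finset.sum_Ico_eq_sum_range]
      simp
    have step5 : walkCnt (i+L) e x
        = (∑ j ∈ range i, if e j = x then (1:ℤ) else 0)
          + ∑ j ∈ Finset.Ico i (i+L), if e j = x then (1:ℤ) else 0 := by
      unfold walkCnt
      rw [Finset.range_eq_Ico, Finset.range_eq_Ico]
      exact (Finset.sum_Ico_consecutive (fun j => if e j = x then (1:ℤ) else 0) (Nat.zero_le i) (k := i+L) (by omega)).symm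
    have hnn : (0:ℤ) ≤ ∑ j ∈ range i, if e j = x then (1:ℤ) else 0 :=
      Finset.sum_nonneg fun j _ => by split_ifs <;> norm_num
    have := hcn x
    rw [step5] at this
    rw [step2, step3, step4]
    linarith

lemma altWeight_eq_sign {g : E → ℤ} (t : G.CycleTraversal)
    (hsig : haveI : NeZero t.L := ⟨t.pos⟩
      ∀ m : ZMod t.L, 0 < (-1:ℤ)^(m.val) * g (t.e m)) (x : E) :
    t.altWeight x = Int.sign (g x) * tcnt t x := by
  haveI : NeZero t.L := ⟨t.pos⟩
  unfold CycleTraversal.altWeight tcnt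
  rw [Finset.mul_sum]
  apply Finset.sum_congr rfl
  intro m _
  by_cases h : t.e m = x
  · simp only [h, if_true, mul_one]
    rw [← h]
    exact neg_one_pow_eq_sign (hsig m)
  · simp [h]

lemma altWeight_bal (t : G.CycleTraversal) (hev : Even t.L) (u : V) :
    ∑ x : E, G.mult u x * t.altWeight x = 0 := by
  haveI : NeZero t.L := ⟨t.pos⟩
  have hL2 : 2 ≤ t.L := by
    rcases hev with ⟨c, hcc⟩
    have := t.pos
    omega
  unfold CycleTraversal.altWeight
  have swap : ∑ x : E, G.mult u x * (∑ m : ZMod t.L, if t.e m = x then (-1:ℤ)^(m.val) else 0)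
      = ∑ m : ZMod t.L, G.mult u (t.e m) * (-1:ℤ)^(m.val) := by
    have h1 : ∀ x : E, G.mult u x * (∑ m : ZMod t.L, if t.e m = x then (-1:ℤ)^(m.val) else 0)
        = ∑ m : ZMod t.L, (if t.e m = x then G.mult u x * (-1:ℤ)^(m.val) else 0) := by
      intro x
      rw [Finset.mul_sum]
      exact Finset.sum_congr rfl fun m _ => by split_ifs <;> ring
    rw [Finset.sum_congr rfl fun x _ => h1 x, Finset.sum_comm]
    apply Finset.sum_congr rfl
    intro m _
    rw [Finset.sum_eq_single (t.e m)]
    · simp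
    · intro b _ hb; simp [Ne.symm hb]
    · simp
  rw [swap]
  have expand : ∀ m : ZMod t.L, G.mult u (t.e m) * (-1:ℤ)^(m.val)
      = (if u = t.v (m-1) then 1 else 0) * (-1:ℤ)^(m.val)
        + (if u = t.v m then 1 else 0) * (-1:ℤ)^(m.val) := by
    intro m
    rw [mult_eq (t.compat m)]
    ring
  rw [Finset.sum_congr rfl fun m _ => expand m, Finset.sum_add_distrib]
  have reindex : ∑ m : ZMod t.L, (if u = t.v (m-1) then (1:ℤ) else 0) * (-1:ℤ)^(m.val)
      = ∑ m : ZMod t.L, (if u = t.v m then (1:ℤ) else 0) * (-1:ℤ)^((m+1).val) := by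
    apply Fintype.sum_equiv (Equiv.addRight ((1 : ZMod t.L))).symm
    intro m
    simp [sub_eq_add_neg]
  rw [reindex, ← Finset.sum_add_distrib]
  apply Finset.sum_eq_zero
  intro m _
  have hval : ((m+1).val) % 2 = (m.val + 1) % 2 := by
    haveI : Fact (1 < t.L) := ⟨by omega⟩
    rw [ZMod.val_add, ZMod.val_one]
    exact Nat.mod_mod_of_dvd (m.val + 1) hev.two_dvd
  have : (-1:ℤ)^((m+1).val) = -(-1:ℤ)^(m.val) := by
    rw [neg_one_pow_congr hval, pow_succ]
    ring
  rw [this]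
  ring

lemma decomp (N : ℕ) :
    ∀ g : E → ℤ, (∀ u : V, ∑ x : E, G.mult u x * g x = 0) → l1 g ≤ N →
    ∃ (n : ℕ) (T : Fin n → G.CycleTraversal),
      (∀ k : Fin n, Even (T k).L) ∧ g = ∑ k : Fin n, (T k).altWeight := by
  induction N with
  | zero =>
    intro g hbal hl1
    have hz : ∀ x : E, g x = 0 := by
      intro x
      have h1 : ∀ y ∈ (univ : Finset E), (0:ℤ) ≤ |g y| := fun y _ => abs_nonneg _
      have h2 : l1 g = 0 := le_antisymm (by exact_mod_cast hl1) (Finset.sum_nonneg h1)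
      have := (Finset.sum_eq_zero_iff_of_nonneg h1).mp h2 x (mem_univ x)
      exact abs_eq_zero.mp this
    refine ⟨0, Fin.elim0, fun k => k.elim0, ?_⟩
    funext x
    simp [hz x]
  | succ N ih =>
    intro g hbal hl1
    by_cases hg : g = 0
    · refine ⟨0, Fin.elim0, fun k => k.elim0, ?_⟩
      funext x
      simp [hg]
    obtain ⟨t, htev, hsig, hcnt⟩ := exists_traversal hbal hg
    haveI : NeZero t.L := ⟨t.pos⟩
    set w := t.altWeight with hw
    have habs : ∀ x : E, |g x - w x| = |g x| - tcnt t x := by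
      intro x
      rw [hw, altWeight_eq_sign t hsig x]
      have hc1 := hcnt x
      have hc2 := tcnt_nonneg t x
      rcases lt_trichotomy (g x) 0 with h | h | h
      · rw [Int.sign_eq_neg_one_of_neg h, abs_of_neg h] at *
        rw [abs_of_nonpos (by linarith)]
        ring
      · have hc1' : tcnt t x ≤ 0 := by rw [h, abs_zero] at hc1; exact hc1
        have hz : tcnt t x = 0 := le_antisymm hc1' hc2
        rw [h, hz]
        simp
      · rw [Int.sign_eq_one_of_pos h, abs_of_pos h] at *
        rw [abs_of_nonneg (by linarith)]
        ring
    have hl1' : l1 (g - w) ≤ N := by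
      have hsum : l1 (g - w) = l1 g - ∑ x : E, tcnt t x := by
        unfold l1
        rw [← Finset.sum_sub_distrib]
        exact Finset.sum_congr rfl fun x _ => habs x
      have hone : (1:ℤ) ≤ ∑ x : E, tcnt t x := by
        calc (1:ℤ) ≤ tcnt t (t.e 0) := one_le_tcnt t 0
          _ ≤ ∑ x : E, tcnt t x :=
            Finset.single_le_sum (fun x _ => tcnt_nonneg t x) (mem_univ _)
      push_cast at hl1 ⊢
      omega
    have hbal' : ∀ u : V, ∑ x : E, G.mult u x * (g - w) x = 0 := by
      intro u
      have h1 : ∀ x : E, G.mult u x * (g - w) x = G.mult u x * g x - G.mult u x * w x := by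
        intro x; simp [Pi.sub_apply]; ring
      rw [Finset.sum_congr rfl fun x _ => h1 x, Finset.sum_sub_distrib, hbal u,
        altWeight_bal t htev u]
      ring
    obtain ⟨n, T, hT, hsum⟩ := ih (g - w) hbal' hl1'
    refine ⟨n+1, Fin.cons t T, ?_, ?_⟩
    · intro k
      refine Fin.cases ?_ ?_ k
      · exact htev
      · intro j; exact hT j
    · have hcons : ∀ k : Fin (n+1), ((Fin.cons (α := fun _ => G.CycleTraversal) t T) k).altWeight
          = Fin.cons (α := fun _ => E → ℤ) (t.altWeight) (fun j => (T j).altWeight) k := by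
        intro k
        refine Fin.cases ?_ ?_ k
        · rfl
        · intro j; rfl
      rw [Finset.sum_congr rfl fun k _ => hcons k, Fin.sum_cons]
      funext x
      have hthis := congrFun hsum x
      simp only [Pi.sub_apply] at hthis
      simp only [Pi.add_apply]
      linarith [hthis]

lemma conj_conj (h : E → ℤ) : G.conj (G.conj h) = h := by
  funext x
  unfold conj
  split_ifs <;> ring

lemma conj_sum (n : ℕ) (w : Fin n → E → ℤ) :
    G.conj (∑ k : Fin n, w k) = ∑ k : Fin n, G.conj (w k) := by
  funext x
  simp only [SeqGraph.conj, Finset.sum_apply]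
  split_ifs with h
  · rfl
  · simp

end Aux

end SeqGraph

/-- On a connected sequence graph in which every vertex is incident to a
segment edge and to a bond edge, every integer flow is a finite sum of
alternating flows of even-length cycle traversals. -/
theorem stmt_8 (V E : Type) [Fintype V] [Fintype E] (G : SeqGraph V E)
    (hconn : G.Connected)
    (hseg : ∀ u : V, ∃ x : E, G.seg x ∧ u ∈ G.ends x)
    (hbond : ∀ u : V, ∃ x : E, ¬ G.seg x ∧ u ∈ G.ends x)
    (f : E → ℤ) (hf : G.IsFlow f) :
    ∃ (n : ℕ) (T : Fin n → G.CycleTraversal),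
      (∀ k : Fin n, Even (T k).L) ∧
      f = ∑ k : Fin n, (T k).altFlow := by
  have hbalc : ∀ u : V, ∑ x : E, G.mult u x * (G.conj f) x = 0 := by
    intro u
    have h1 : ∀ x : E, G.mult u x * G.conj f x
        = (if G.seg x then G.mult u x * f x else 0)
          - (if G.seg x then 0 else G.mult u x * f x) := by
      intro x
      unfold SeqGraph.conj
      split_ifs <;> ring
    rw [Finset.sum_congr rfl fun x _ => h1 x, Finset.sum_sub_distrib, hf u, sub_self]
  have hle : SeqGraph.l1 (G.conj f) ≤ ((SeqGraph.l1 (G.conj f)).toNat : ℤ) :=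
    Int.self_le_toNat _
  obtain ⟨n, T, hT, hsum⟩ :=
    SeqGraph.decomp (SeqGraph.l1 (G.conj f)).toNat (G.conj f) hbalc hle
  refine ⟨n, T, hT, ?_⟩
  calc f = G.conj (G.conj f) := (SeqGraph.conj_conj f).symm
    _ = G.conj (∑ k : Fin n, (T k).altWeight) := by rw [← hsum]
    _ = ∑ k : Fin n, G.conj ((T k).altWeight) := SeqGraph.conj_sum n _
    _ = ∑ k : Fin n, (T k).altFlow := rfl
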